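/- There is a universal constant c > 0 such that the following holds. Let p, q be distributions on [k] with 0 < d_h²(p,q) ≤ 1/e, and let m := min(k, 1 + log(1/d_h²(p,q))). For every integer ℓ with 2 < ℓ ≤ m, at least one of the following holds: (1) there exists a channel T ∈ T_{ℓ,k} such that, writing p' = Tp and q' = Tq, Σ_{i : q'_i > 0 and 1/2 ≤ p'_i/q'_i ≤ 2} (√q'_i − √p'_i)² ≥ c·d_h²(p,q)·ℓ/m; or (2) there exists a channel T ∈ T_{2,k} with d_h²(Tp, Tq) ≥ c·d_h²(p,q). -/

import Mathlib

open scoped Classical ENNReal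
open Finset

noncomputable section

/-- `p` is a probability distribution on `Fin k`. -/
def IsDist {k : ℕ} (p : Fin k → ℝ) : Prop :=
  (∀ i, 0 ≤ p i) ∧ ∑ i, p i = 1

/-- `T` is a channel from `[k]` to `[ℓ]`: nonnegative entries, columns sum to 1. -/
def IsChannel {ℓ k : ℕ} (T : Matrix (Fin ℓ) (Fin k) ℝ) : Prop :=
  (∀ r c, 0 ≤ T r c) ∧ ∀ c, ∑ r, T r c = 1

/-- Squared Hellinger divergence `d_h²(p,q) = Σ_i (√p_i − √q_i)²`. -/
def hellingerSq {k : ℕ} (p q : Fin k → ℝ) : ℝ :=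
  ∑ i, (Real.sqrt (p i) - Real.sqrt (q i)) ^ 2

/-- Total variation distance `d_TV(p,q) = (1/2) Σ_i |p_i − q_i|`. -/
def tvDist {k : ℕ} (p q : Fin k → ℝ) : ℝ :=
  (1 / 2) * ∑ i, |p i - q i|

/-- `T` is an `ε`-LDP channel: `T(r,c) ≤ e^ε T(r,c')` for all rows `r`, columns `c, c'`. -/
def IsLDP {ℓ k : ℕ} (ε : ℝ) (T : Matrix (Fin ℓ) (Fin k) ℝ) : Prop :=
  IsChannel T ∧ ∀ r c c', T r c ≤ Real.exp ε * T r c'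

def detT {k ℓ : ℕ} (f : Fin k → Fin ℓ) : Matrix (Fin ℓ) (Fin k) ℝ :=
  fun r c => if f c = r then 1 else 0

lemma detT_isChannel {k ℓ : ℕ} (f : Fin k → Fin ℓ) : IsChannel (detT f) := by
  constructor
  · intro r c; unfold detT; positivity
  · intro c; simp [detT]

lemma detT_mulVec {k ℓ : ℕ} (f : Fin k → Fin ℓ) (p : Fin k → ℝ) (r : Fin ℓ) :
    (detT f).mulVec p r = ∑ c ∈ univ.filter (fun c => f c = r), p c := by
  rw [Finset.sum_filter]
  simp [Matrix.mulVec, detT, dotProduct, ite_mul]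

lemma sqrt_sub_sq_le_self {x y : ℝ} (hx : 0 ≤ x) (hxy : x ≤ y) :
    (Real.sqrt y - Real.sqrt x) ^ 2 ≤ y := by
  have h1 : Real.sqrt x ≤ Real.sqrt y := Real.sqrt_le_sqrt hxy
  have h2 : 0 ≤ Real.sqrt y - Real.sqrt x := by linarith
  have h3 : Real.sqrt y - Real.sqrt x ≤ Real.sqrt y := by
    have := Real.sqrt_nonneg x; linarith
  calc (Real.sqrt y - Real.sqrt x) ^ 2 ≤ (Real.sqrt y)^2 := by
        apply pow_le_pow_left₀ h2 h3
   _ = y := Real.sq_sqrt (hx.trans hxy)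

lemma merge_incomp {k : ℕ} (A : Finset (Fin k)) (x y : Fin k → ℝ)
    (hx : ∀ i, 0 ≤ x i) (hy : ∀ i, 0 ≤ y i) (h2 : ∀ i ∈ A, 2 * x i ≤ y i) :
    (Real.sqrt 2 - 1)^2 / 2 * ∑ i ∈ A, (Real.sqrt (y i) - Real.sqrt (x i))^2
      ≤ (Real.sqrt (∑ i ∈ A, y i) - Real.sqrt (∑ i ∈ A, x i))^2 := by
  set X := ∑ i ∈ A, x i with hX
  set Y := ∑ i ∈ A, y i with hY
  have hX0 : 0 ≤ X := Finset.sum_nonneg fun i _ => hx i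
  have hY0 : 0 ≤ Y := Finset.sum_nonneg fun i _ => hy i
  have h2XY : 2 * X ≤ Y := by
    rw [hX, hY, Finset.mul_sum]; exact Finset.sum_le_sum h2
  have hty : ∑ i ∈ A, (Real.sqrt (y i) - Real.sqrt (x i))^2 ≤ Y := by
    rw [hY]; apply Finset.sum_le_sum; intro i hi
    exact sqrt_sub_sq_le_self (hx i) (by have := hx i; have := h2 i hi; linarith)
  have hsX : Real.sqrt X ≤ Real.sqrt Y / Real.sqrt 2 := by
    rw [← Real.sqrt_div hY0]
    exact Real.sqrt_le_sqrt (by linarith)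
  have hs2 : (1:ℝ) < Real.sqrt 2 := by
    rw [show (1:ℝ) = Real.sqrt 1 by simp]
    exact Real.sqrt_lt_sqrt (by norm_num) (by norm_num)
  have key : Real.sqrt Y * (1 - 1 / Real.sqrt 2) ≤ Real.sqrt Y - Real.sqrt X := by
    have : Real.sqrt Y / Real.sqrt 2 = Real.sqrt Y * (1/Real.sqrt 2) := by ring
    nlinarith [Real.sqrt_nonneg Y]
  have hkey0 : 0 ≤ Real.sqrt Y * (1 - 1 / Real.sqrt 2) := by
    apply mul_nonneg (Real.sqrt_nonneg Y)
    have : 1 / Real.sqrt 2 < 1 := by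
      rw [div_lt_one (by positivity)]; exact hs2
    linarith
  have hsq : (Real.sqrt Y * (1 - 1 / Real.sqrt 2))^2 ≤ (Real.sqrt Y - Real.sqrt X)^2 :=
    pow_le_pow_left₀ hkey0 key 2
  have expand : (Real.sqrt Y * (1 - 1 / Real.sqrt 2))^2 = Y * (1 - 1/Real.sqrt 2)^2 := by
    rw [mul_pow, Real.sq_sqrt hY0]
  have hc : (1 - 1/Real.sqrt 2)^2 = (Real.sqrt 2 - 1)^2 / 2 := by
    have h2' : Real.sqrt 2 ≠ 0 := by positivity
    have : (1 - 1/Real.sqrt 2) = (Real.sqrt 2 - 1)/Real.sqrt 2 := by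
      field_simp
    rw [this, div_pow, Real.sq_sqrt (by norm_num : (0:ℝ) ≤ 2)]
  calc (Real.sqrt 2 - 1)^2 / 2 * ∑ i ∈ A, (Real.sqrt (y i) - Real.sqrt (x i))^2
      ≤ (Real.sqrt 2 - 1)^2 / 2 * Y := by
        apply mul_le_mul_of_nonneg_left hty; positivity
    _ = (Real.sqrt Y * (1 - 1 / Real.sqrt 2))^2 := by rw [expand, hc]; ring
    _ ≤ _ := hsq


lemma exists_dominating (V : Finset ℕ) (b : ℕ → ℝ) (r : ℕ) (hr : r ≤ V.card) :
    ∃ W ⊆ V, W.card = r ∧ ∀ v ∈ V \ W, ∀ w ∈ W, b v ≤ b w := by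
  induction r with
  | zero => exact ⟨∅, Finset.empty_subset V, rfl, by simp⟩
  | succ n ih =>
      obtain ⟨W, hWV, hWcard, hdom⟩ := ih (le_of_lt (Nat.lt_of_succ_le hr))
      have hne : (V \ W).Nonempty := by
        rw [← Finset.card_pos, Finset.card_sdiff_of_subset hWV, hWcard]
        omega
      obtain ⟨v₀, hv₀, hmax⟩ := Finset.exists_max_image (V \ W) b hne
      refine ⟨insert v₀ W, ?_, ?_, ?_⟩
      · apply Finset.insert_subset (Finset.mem_sdiff.mp hv₀).1 hWV
      · rw [Finset.card_insert_of_notMem (Finset.mem_sdiff.mp hv₀).2, hWcard]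
      · intro v hv w hw
        have hv' : v ∈ V \ W := by
          rw [Finset.mem_sdiff] at hv ⊢
          exact ⟨hv.1, fun h => hv.2 (Finset.mem_insert_of_mem h)⟩
        rcases Finset.mem_insert.mp hw with h | h
        · subst h; exact hmax v hv'
        · exact hdom v hv' w h

lemma dominating_avg (V W : Finset ℕ) (b : ℕ → ℝ) (hb : ∀ v ∈ V, 0 ≤ b v)
    (hWV : W ⊆ V) (hdom : ∀ v ∈ V \ W, ∀ w ∈ W, b v ≤ b w) :
    (W.card : ℝ) * ∑ v ∈ V, b v ≤ (V.card : ℝ) * ∑ w ∈ W, b w := by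
  have hWb : 0 ≤ ∑ w ∈ W, b w := Finset.sum_nonneg fun w hw => hb w (hWV hw)
  have hsplit : ∑ v ∈ V, b v = ∑ w ∈ W, b w + ∑ v ∈ V \ W, b v := by
    rw [add_comm, Finset.sum_sdiff hWV]
  have hterm : ∀ v ∈ V \ W, (W.card : ℝ) * b v ≤ ∑ w ∈ W, b w := by
    intro v hv
    calc (W.card : ℝ) * b v = ∑ _w ∈ W, b v := by rw [Finset.sum_const, nsmul_eq_mul]
      _ ≤ ∑ w ∈ W, b w := Finset.sum_le_sum fun w hw => hdom v hv w hw
  have h1 : (W.card : ℝ) * ∑ v ∈ V \ W, b v ≤ ((V \ W).card : ℝ) * ∑ w ∈ W, b w := by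
    rw [Finset.mul_sum]
    calc ∑ v ∈ V \ W, (W.card : ℝ) * b v ≤ ∑ _v ∈ V \ W, ∑ w ∈ W, b w :=
          Finset.sum_le_sum hterm
      _ = ((V \ W).card : ℝ) * ∑ w ∈ W, b w := by rw [Finset.sum_const, nsmul_eq_mul]
  have hcard : ((V \ W).card : ℝ) = (V.card : ℝ) - W.card := by
    rw [Finset.card_sdiff_of_subset hWV]
    have := Finset.card_le_card hWV
    push_cast [Nat.cast_sub this]
    ring
  rw [hsplit]
  nlinarith [Finset.card_le_card hWV]

lemma exists_inj_enum (W : Finset ℕ) (ℓ : ℕ) (hl : 2 < ℓ) (hcard : W.card ≤ ℓ - 1) :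
    ∃ e : ℕ → Fin ℓ, Set.InjOn e W ∧ ∀ v ∈ W, (e v).val ≠ 0 := by
  classical
  refine ⟨fun v => if h : v ∈ W then ⟨1 + (W.sort (· ≤ ·)).idxOf v, ?_⟩ else ⟨0, by omega⟩, ?_, ?_⟩
  · have hm : v ∈ W.sort (· ≤ ·) := (Finset.mem_sort _).mpr h
    have := List.idxOf_lt_length_iff.mpr hm
    rw [Finset.length_sort] at this
    omega
  · intro v hv w hw hvw
    simp only [Set.mem_setOf_eq, Finset.mem_coe] at hv hw
    simp only [dif_pos hv, dif_pos hw, Fin.mk.injEq] at hvw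
    have hv' : v ∈ W.sort (· ≤ ·) := (Finset.mem_sort _).mpr hv
    have hw' : w ∈ W.sort (· ≤ ·) := (Finset.mem_sort _).mpr hw
    exact (List.idxOf_inj hv').mp (by omega)
  · intro v hv
    simp only [dif_pos hv]
    omega


lemma bucket_merge {k : ℕ} (G : Finset (Fin k)) (p q : Fin k → ℝ) (a : ℝ)
    (ha : 0 < a) (ha2 : a ≤ 1/4)
    (hq : ∀ i ∈ G, 0 < q i) (hp : ∀ i ∈ G, 0 ≤ p i)
    (hcase : (∀ i ∈ G, a * Real.sqrt (q i) < Real.sqrt (p i) - Real.sqrt (q i) ∧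
                Real.sqrt (p i) - Real.sqrt (q i) ≤ 2*a*Real.sqrt (q i))
           ∨ (∀ i ∈ G, a * Real.sqrt (q i) < Real.sqrt (q i) - Real.sqrt (p i) ∧
                Real.sqrt (q i) - Real.sqrt (p i) ≤ 2*a*Real.sqrt (q i))) :
    (∑ i ∈ G, (Real.sqrt (p i) - Real.sqrt (q i))^2) ≤
      4 * (Real.sqrt (∑ i ∈ G, p i) - Real.sqrt (∑ i ∈ G, q i))^2 := by
  set P := ∑ i ∈ G, p i with hPdef
  set Q := ∑ i ∈ G, q i with hQdef
  have hP0 : 0 ≤ P := Finset.sum_nonneg hp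
  have hQ0 : 0 ≤ Q := Finset.sum_nonneg (fun i hi => (hq i hi).le)
  have htq : ∀ i ∈ G, (Real.sqrt (p i) - Real.sqrt (q i))^2 ≤ 4 * a^2 * q i := by
    intro i hi
    have h1 : |Real.sqrt (p i) - Real.sqrt (q i)| ≤ 2 * a * Real.sqrt (q i) := by
      rcases hcase with hc | hc
      · obtain ⟨hlo, hhi⟩ := hc i hi
        rw [abs_le]
        constructor
        · nlinarith [Real.sqrt_nonneg (q i)]
        · exact hhi
      · obtain ⟨hlo, hhi⟩ := hc i hi
        rw [abs_le]
        constructor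
        · linarith
        · nlinarith [Real.sqrt_nonneg (q i)]
    calc (Real.sqrt (p i) - Real.sqrt (q i))^2
        = |Real.sqrt (p i) - Real.sqrt (q i)|^2 := (sq_abs _).symm
      _ ≤ (2 * a * Real.sqrt (q i))^2 := by
          apply pow_le_pow_left₀ (abs_nonneg _) h1
      _ = 4 * a^2 * q i := by
          rw [mul_pow, mul_pow, Real.sq_sqrt (hq i hi).le]; ring
  have hsumt : ∑ i ∈ G, (Real.sqrt (p i) - Real.sqrt (q i))^2 ≤ 4 * a^2 * Q := by
    calc ∑ i ∈ G, (Real.sqrt (p i) - Real.sqrt (q i))^2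
        ≤ ∑ i ∈ G, 4 * a^2 * q i := Finset.sum_le_sum htq
      _ = 4 * a^2 * Q := by rw [hQdef, Finset.mul_sum]
  -- main: (√P - √Q)^2 ≥ a^2 Q
  have hmain : a^2 * Q ≤ (Real.sqrt P - Real.sqrt Q)^2 := by
    rcases hcase with hc | hc
    · -- positive case: P ≥ (1+a)^2 Q
      have hPQ : (1+a)^2 * Q ≤ P := by
        rw [hPdef, hQdef, Finset.mul_sum]
        apply Finset.sum_le_sum
        intro i hi
        obtain ⟨hlo, _⟩ := hc i hi
        have hqi := (hq i hi).le
        have hsq : Real.sqrt (p i) ≥ (1+a) * Real.sqrt (q i) := by nlinarith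
        have : ((1+a) * Real.sqrt (q i))^2 ≤ (Real.sqrt (p i))^2 := by
          apply pow_le_pow_left₀ (by positivity) hsq
        rw [Real.sq_sqrt (hp i hi), mul_pow, Real.sq_sqrt hqi] at this
        linarith [this]
      have hsqrtP : (1+a) * Real.sqrt Q ≤ Real.sqrt P := by
        have h1 : Real.sqrt ((1+a)^2 * Q) ≤ Real.sqrt P := Real.sqrt_le_sqrt hPQ
        rwa [Real.sqrt_mul (by positivity) Q, Real.sqrt_sq (by positivity)] at h1
      have hd : a * Real.sqrt Q ≤ Real.sqrt P - Real.sqrt Q := by nlinarith [Real.sqrt_nonneg Q]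
      have := pow_le_pow_left₀ (by positivity : (0:ℝ) ≤ a * Real.sqrt Q) hd 2
      rw [mul_pow, Real.sq_sqrt hQ0] at this
      linarith
    · -- negative case: P ≤ (1-a)^2 Q
      have hPQ : P ≤ (1-a)^2 * Q := by
        rw [hPdef, hQdef, Finset.mul_sum]
        apply Finset.sum_le_sum
        intro i hi
        obtain ⟨hlo, _⟩ := hc i hi
        have hqi := (hq i hi).le
        have hsq : Real.sqrt (p i) ≤ (1-a) * Real.sqrt (q i) := by nlinarith [Real.sqrt_nonneg (q i)]
        have hsp0 : 0 ≤ Real.sqrt (p i) := Real.sqrt_nonneg _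
        have : (Real.sqrt (p i))^2 ≤ ((1-a) * Real.sqrt (q i))^2 := by
          apply pow_le_pow_left₀ hsp0 hsq
        rw [Real.sq_sqrt (hp i hi), mul_pow, Real.sq_sqrt hqi] at this
        linarith [this]
      have hsqrtP : Real.sqrt P ≤ (1-a) * Real.sqrt Q := by
        have h1 : Real.sqrt P ≤ Real.sqrt ((1-a)^2 * Q) := Real.sqrt_le_sqrt hPQ
        rwa [Real.sqrt_mul (by positivity) Q, Real.sqrt_sq (by linarith)] at h1
      have hd : a * Real.sqrt Q ≤ Real.sqrt Q - Real.sqrt P := by nlinarith [Real.sqrt_nonneg Q]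
      have := pow_le_pow_left₀ (by positivity : (0:ℝ) ≤ a * Real.sqrt Q) hd 2
      rw [mul_pow, Real.sq_sqrt hQ0] at this
      nlinarith [this]
  linarith


set_option maxHeartbeats 2000000 in
lemma comparable_case {k ℓ : ℕ} (p q : Fin k → ℝ) (hp : IsDist p) (hq : IsDist q)
    (hh0 : 0 < hellingerSq p q) (hhe : hellingerSq p q ≤ 1 / Real.exp 1)
    (hl : 2 < ℓ) (hlm : (ℓ : ℝ) ≤ min (k : ℝ) (1 + Real.log (1 / hellingerSq p q)))
    (hScase : hellingerSq p q / 2 ≤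
      ∑ i ∈ univ.filter (fun i => 0 < q i ∧ 1/2 ≤ p i / q i ∧ p i / q i ≤ 2),
        (Real.sqrt (p i) - Real.sqrt (q i))^2) :
    ∃ T : Matrix (Fin ℓ) (Fin k) ℝ, IsChannel T ∧
        (1/200 : ℝ) * hellingerSq p q * (ℓ : ℝ) /
            min (k : ℝ) (1 + Real.log (1 / hellingerSq p q)) ≤
          ∑ i ∈ Finset.univ.filter
              (fun i => 0 < T.mulVec q i ∧
                1 / 2 ≤ T.mulVec p i / T.mulVec q i ∧
                T.mulVec p i / T.mulVec q i ≤ 2),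
            (Real.sqrt (T.mulVec q i) - Real.sqrt (T.mulVec p i)) ^ 2 := by
  set h := hellingerSq p q with hdef
  set L := Real.log (1 / h) with hLdef
  set m := min (k : ℝ) (1 + L) with hmdef
  set t : Fin k → ℝ := fun i => (Real.sqrt (p i) - Real.sqrt (q i))^2 with htdef
  set d : Fin k → ℝ := fun i => Real.sqrt (p i) - Real.sqrt (q i) with hddef
  set S : Finset (Fin k) := univ.filter (fun i => 0 < q i ∧ 1/2 ≤ p i / q i ∧ p i / q i ≤ 2)
    with hSdef
  -- basic facts
  have hL1 : 1 ≤ L := by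
    rw [hLdef]
    calc (1:ℝ) = Real.log (Real.exp 1) := (Real.log_exp 1).symm
      _ ≤ Real.log (1 / h) := by
          apply Real.log_le_log (Real.exp_pos 1)
          rw [le_div_iff₀ hh0]
          calc Real.exp 1 * h ≤ Real.exp 1 * (1 / Real.exp 1) := by
                apply mul_le_mul_of_nonneg_left hhe (Real.exp_pos 1).le
            _ = 1 := by field_simp
  have hm3 : (3:ℝ) ≤ m := le_trans (by exact_mod_cast hl) hlm
  have hcomp : ∀ i ∈ S, 0 < q i ∧ q i / 2 ≤ p i ∧ p i ≤ 2 * q i := by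
    intro i hi
    rw [hSdef, Finset.mem_filter] at hi
    obtain ⟨-, hq0, hr1, hr2⟩ := hi
    refine ⟨hq0, ?_, ?_⟩
    · rw [le_div_iff₀ hq0] at hr1
      linarith
    · rw [div_le_iff₀ hq0] at hr2
      linarith
  have hs2 : (Real.sqrt 2)^2 = 2 := Real.sq_sqrt (by norm_num)
  have hs2lt : Real.sqrt 2 < 3/2 := by
    rw [show (3/2:ℝ) = Real.sqrt ((3/2)^2) from (Real.sqrt_sq (by norm_num)).symm]
    apply Real.sqrt_lt_sqrt (by norm_num) (by norm_num)
  have hs2ge : 1 ≤ Real.sqrt 2 := by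
    rw [show (1:ℝ) = Real.sqrt 1 by simp]
    exact Real.sqrt_le_sqrt (by norm_num)
  -- |d i| < (1/2) √(q i) on S
  have hd_bound : ∀ i ∈ S, |d i| < (1/2) * Real.sqrt (q i) := by
    intro i hi
    obtain ⟨hq0, hlow, hhigh⟩ := hcomp i hi
    have hp0 : 0 ≤ p i := le_trans (by positivity) hlow
    have hup : Real.sqrt (p i) ≤ Real.sqrt 2 * Real.sqrt (q i) := by
      rw [← Real.sqrt_mul (by norm_num : (0:ℝ) ≤ 2)]
      exact Real.sqrt_le_sqrt hhigh
    have hsq0 : 0 < Real.sqrt (q i) := Real.sqrt_pos.mpr hq0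
    rw [abs_lt]
    constructor
    · have hlo2 : (1/2) * Real.sqrt (q i) < Real.sqrt (p i) := by
        rw [show (1/2) * Real.sqrt (q i) = Real.sqrt (q i) * (1/2) from mul_comm _ _]
        rw [Real.lt_sqrt (by positivity)]
        nlinarith [Real.sq_sqrt hq0.le]
      simp only [hddef]
      linarith
    · have : Real.sqrt 2 * Real.sqrt (q i) < (3/2) * Real.sqrt (q i) :=
        mul_lt_mul_of_pos_right hs2lt hsq0
      simp only [hddef]
      linarith
  -- bucket index
  set u : Fin k → ℝ := fun i => |d i| / Real.sqrt (q i) with hudef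
  have ex : ∀ i : Fin k, 0 < u i → ∃ n : ℕ, (1/2:ℝ)^(n+1) < u i := by
    intro i hu
    obtain ⟨n, hn⟩ := exists_pow_lt_of_lt_one hu (by norm_num : (1/2:ℝ) < 1)
    exact ⟨n, lt_of_le_of_lt (pow_le_pow_of_le_one (by norm_num) (by norm_num) (Nat.le_succ n)) hn⟩
  set nn : Fin k → ℕ := fun i => if hu : 0 < u i then Nat.find (ex i hu) else 0 with hnndef
  have hu_pos : ∀ i ∈ S, d i ≠ 0 → 0 < u i := by
    intro i hi hd
    have hq0 := (hcomp i hi).1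
    rw [hudef]
    apply div_pos (abs_pos.mpr hd) (Real.sqrt_pos.mpr hq0)
  have hu_lt : ∀ i ∈ S, u i < 1/2 := by
    intro i hi
    have hq0 := (hcomp i hi).1
    have hsq0 : 0 < Real.sqrt (q i) := Real.sqrt_pos.mpr hq0
    rw [hudef, div_lt_iff₀ hsq0]
    have := hd_bound i hi
    linarith
  have hnn_spec : ∀ i ∈ S, d i ≠ 0 →
      1 ≤ nn i ∧ (1/2:ℝ)^(nn i + 1) < u i ∧ u i ≤ (1/2:ℝ)^(nn i) := by
    intro i hi hd
    have hu0 := hu_pos i hi hd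
    have hul := hu_lt i hi
    rw [hnndef]
    simp only [dif_pos hu0]
    have hspec := Nat.find_spec (ex i hu0)
    have hge1 : 1 ≤ Nat.find (ex i hu0) := by
      rcases Nat.eq_zero_or_pos (Nat.find (ex i hu0)) with h0 | h0
      · exfalso
        rw [h0] at hspec
        norm_num at hspec
        linarith
      · exact h0
    refine ⟨hge1, hspec, ?_⟩
    have hmin := Nat.find_min (ex i hu0) (show Nat.find (ex i hu0) - 1 < Nat.find (ex i hu0) by omega)
    push_neg at hmin
    have : Nat.find (ex i hu0) - 1 + 1 = Nat.find (ex i hu0) := by omega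
    rwa [this] at hmin
  -- threshold J and relevant set R
  set J : ℕ := ⌈Real.logb 4 (8 / h)⌉₊ with hJdef
  have h8h : (1:ℝ) ≤ 8 / h := by
    rw [le_div_iff₀ hh0]
    have : h ≤ 1 := by
      have := Real.exp_pos 1
      have h1e : (1:ℝ) / Real.exp 1 ≤ 1 := by
        rw [div_le_one this]
        linarith [Real.add_one_le_exp 1]
      linarith
    linarith
  have hlogb0 : 0 ≤ Real.logb 4 (8 / h) := Real.logb_nonneg (by norm_num) h8h
  have h4J : 8 / h ≤ (4:ℝ)^J := by
    have h1 : Real.logb 4 (8/h) ≤ (J:ℝ) := Nat.le_ceil _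
    have h2 : (4:ℝ)^(Real.logb 4 (8/h)) ≤ (4:ℝ)^(J:ℝ) := by
      apply Real.rpow_le_rpow_of_exponent_le (by norm_num) h1
    rwa [Real.rpow_logb (by norm_num) (by norm_num) (by positivity), Real.rpow_natCast] at h2
  have hpowJ : (1/2:ℝ)^(2*J+2) ≤ h / 8 := by
    have h4J1 : 8 / h ≤ (4:ℝ)^(J+1) := by
      calc 8/h ≤ (4:ℝ)^J := h4J
        _ ≤ (4:ℝ)^(J+1) := by
            apply pow_le_pow_right₀ (by norm_num) (Nat.le_succ J)
    have heq : (1/2:ℝ)^(2*J+2) = 1 / (4:ℝ)^(J+1) := by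
      rw [show 2*J+2 = 2*(J+1) by ring, pow_mul]
      rw [show ((1:ℝ)/2)^2 = (1/4 : ℝ) by norm_num, one_div, inv_pow, one_div]
    rw [heq]
    rw [div_le_div_iff₀ (by positivity) (by norm_num)]
    rw [div_le_iff₀ hh0] at h4J1
    linarith
  set R : Finset (Fin k) := S.filter (fun i => d i ≠ 0 ∧ nn i ≤ J) with hRdef
  -- tail bound : sum over S \ R is small
  have htail : ∑ i ∈ S.filter (fun i => ¬(d i ≠ 0 ∧ nn i ≤ J)), t i ≤ h / 8 := by
    have hqsum : ∑ i ∈ S.filter (fun i => ¬(d i ≠ 0 ∧ nn i ≤ J)), q i ≤ 1 := by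
      rw [← hq.2]
      apply Finset.sum_le_sum_of_subset_of_nonneg (Finset.subset_univ _)
      intro i _ _
      exact hq.1 i
    calc ∑ i ∈ S.filter (fun i => ¬(d i ≠ 0 ∧ nn i ≤ J)), t i
        ≤ ∑ i ∈ S.filter (fun i => ¬(d i ≠ 0 ∧ nn i ≤ J)), (1/2:ℝ)^(2*J+2) * q i := by
          apply Finset.sum_le_sum
          intro i hi
          rw [Finset.mem_filter] at hi
          obtain ⟨hiS, hcond⟩ := hi
          push_neg at hcond
          by_cases hd : d i = 0
          · have : t i = 0 := by rw [htdef]; simp only; rw [show Real.sqrt (p i) - Real.sqrt (q i) = d i from rfl, hd]; ring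
            rw [this]
            have := (hcomp i hiS).1
            positivity
          · have hJlt := hcond hd
            obtain ⟨-, -, hup⟩ := hnn_spec i hiS hd
            have hq0 := (hcomp i hiS).1
            have hsq0 : 0 < Real.sqrt (q i) := Real.sqrt_pos.mpr hq0
            have hdu : |d i| = u i * Real.sqrt (q i) := by
              rw [hudef]; field_simp
            have ht_eq : t i = (u i)^2 * q i := by
              rw [htdef]
              simp only
              rw [← sq_abs, hdu, mul_pow, Real.sq_sqrt hq0.le]
            rw [ht_eq]
            have hu_le : u i ≤ (1/2:ℝ)^(J+1) := by
              calc u i ≤ (1/2:ℝ)^(nn i) := hup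
                _ ≤ (1/2:ℝ)^(J+1) := by
                    apply pow_le_pow_of_le_one (by norm_num) (by norm_num)
                    omega
            have hu0 : 0 ≤ u i := by rw [hudef]; positivity
            have : (u i)^2 ≤ ((1/2:ℝ)^(J+1))^2 := pow_le_pow_left₀ hu0 hu_le 2
            rw [← pow_mul, show (J+1)*2 = 2*J+2 by ring] at this
            nlinarith
      _ = (1/2:ℝ)^(2*J+2) * ∑ i ∈ S.filter (fun i => ¬(d i ≠ 0 ∧ nn i ≤ J)), q i := by
          rw [Finset.mul_sum]
      _ ≤ (1/2:ℝ)^(2*J+2) * 1 := by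
          apply mul_le_mul_of_nonneg_left hqsum (by positivity)
      _ ≤ h / 8 := by rw [mul_one]; exact hpowJ
  have hRsum : 3 * h / 8 ≤ ∑ i ∈ R, t i := by
    have hsplit := Finset.sum_filter_add_sum_filter_not S (fun i => d i ≠ 0 ∧ nn i ≤ J) t
    have ht0 : ∀ i, 0 ≤ t i := by intro i; rw [htdef]; positivity
    rw [hRdef]
    have : ∑ i ∈ S, t i ≤ ∑ i ∈ S.filter (fun i => d i ≠ 0 ∧ nn i ≤ J), t i + h/8 := by
      rw [← hsplit]
      have := htail
      linarith
    linarith [hScase]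
  -- buckets
  set g : Fin k → ℕ := fun i => 2 * nn i + (if 0 < d i then 0 else 1) with hgdef
  set V : Finset ℕ := R.image g with hVdef
  set b : ℕ → ℝ := fun v => ∑ i ∈ R.filter (fun i => g i = v), t i with hbdef
  have ht0 : ∀ i, 0 ≤ t i := by intro i; rw [htdef]; positivity
  have hb0 : ∀ v ∈ V, 0 ≤ b v := by
    intro v _
    exact Finset.sum_nonneg (fun i _ => ht0 i)
  have hfib : ∑ v ∈ V, b v = ∑ i ∈ R, t i := by
    rw [hVdef, hbdef]
    exact Finset.sum_fiberwise_of_maps_to (fun i hi => Finset.mem_image_of_mem g hi) t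
  have hVsum : 3 * h / 8 ≤ ∑ v ∈ V, b v := by rw [hfib]; exact hRsum
  -- membership facts for R
  have hRmem : ∀ i ∈ R, i ∈ S ∧ d i ≠ 0 ∧ 1 ≤ nn i ∧ nn i ≤ J := by
    intro i hi
    rw [hRdef, Finset.mem_filter] at hi
    exact ⟨hi.1, hi.2.1, (hnn_spec i hi.1 hi.2.1).1, hi.2.2⟩
  -- card bounds for V
  have hVcard_k : V.card ≤ k := by
    calc V.card ≤ R.card := Finset.card_image_le
      _ ≤ (univ : Finset (Fin k)).card := Finset.card_le_card (Finset.subset_univ R)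
      _ = k := Finset.card_fin k
  have hVcard_J : V.card ≤ 2 * J := by
    have hsub : V ⊆ Finset.Icc 2 (2*J+1) := by
      intro v hv
      rw [hVdef, Finset.mem_image] at hv
      obtain ⟨i, hi, rfl⟩ := hv
      obtain ⟨-, -, h1, hJle⟩ := hRmem i hi
      rw [Finset.mem_Icc, hgdef]
      simp only
      split <;> omega
    calc V.card ≤ (Finset.Icc 2 (2*J+1)).card := Finset.card_le_card hsub
      _ = 2*J := by rw [Nat.card_Icc]; omega
  -- J vs L
  have hJL : (2 * J : ℝ) ≤ 4 * (1 + L) := by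
    have hlog2u : Real.log 2 < 0.6931471808 := Real.log_two_lt_d9
    have hlog2l : 0.6931471803 < Real.log 2 := Real.log_two_gt_d9
    have hlogb : Real.logb 4 (8/h) = (3 * Real.log 2 + L) / (2 * Real.log 2) := by
      rw [Real.logb, hLdef]
      have h8 : Real.log 8 = 3 * Real.log 2 := by
        rw [show (8:ℝ) = 2^3 by norm_num, Real.log_pow]
        push_cast; ring
      have h4 : Real.log 4 = 2 * Real.log 2 := by
        rw [show (4:ℝ) = 2^2 by norm_num, Real.log_pow]
        push_cast; ring
      rw [h4, ← h8]
      congr 1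
      rw [show (8:ℝ)/h = 8 * (1/h) by ring, Real.log_mul (by norm_num) (by positivity)]
    have hJle : (J:ℝ) ≤ Real.logb 4 (8/h) + 1 := by
      rw [hJdef]
      exact le_of_lt (Nat.ceil_lt_add_one hlogb0)
    have hx : Real.logb 4 (8/h) ≤ 1 + 2 * L := by
      rw [hlogb, div_le_iff₀ (by linarith)]
      nlinarith [hlog2u, hlog2l, hL1]
    have : (2 * J : ℝ) ≤ 2 * (Real.logb 4 (8/h) + 1) := by
      push_cast
      linarith
    linarith
  have hVcard_m : (V.card : ℝ) ≤ 4 * m := by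
    rw [hmdef]
    rcases le_total (k:ℝ) (1 + L) with hmk | hmk
    · rw [min_eq_left hmk]
      have : (V.card : ℝ) ≤ (k:ℝ) := by exact_mod_cast hVcard_k
      linarith [this]
    · rw [min_eq_right hmk]
      calc (V.card : ℝ) ≤ ((2*J : ℕ) : ℝ) := by exact_mod_cast hVcard_J
        _ ≤ 4 * (1+L) := by push_cast at hJL ⊢; linarith
  -- per-bucket merge facts
  have hbucket : ∀ v ∈ V,
      0 < ∑ i ∈ R.filter (fun i => g i = v), q i ∧
      (∑ i ∈ R.filter (fun i => g i = v), q i) / 2 ≤ ∑ i ∈ R.filter (fun i => g i = v), p i ∧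
      (∑ i ∈ R.filter (fun i => g i = v), p i) ≤ 2 * ∑ i ∈ R.filter (fun i => g i = v), q i ∧
      b v ≤ 4 * (Real.sqrt (∑ i ∈ R.filter (fun i => g i = v), p i) -
        Real.sqrt (∑ i ∈ R.filter (fun i => g i = v), q i))^2 := by
    intro v hv
    rw [hVdef, Finset.mem_image] at hv
    obtain ⟨i₀, hi₀R, hgi₀⟩ := hv
    set G : Finset (Fin k) := R.filter (fun i => g i = v) with hGdef
    have hi₀G : i₀ ∈ G := by
      rw [hGdef, Finset.mem_filter]; exact ⟨hi₀R, hgi₀⟩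
    have hGR : ∀ i ∈ G, i ∈ R ∧ g i = v := by
      intro i hi; rw [hGdef, Finset.mem_filter] at hi; exact hi
    have hsame : ∀ i ∈ G, nn i = nn i₀ ∧ (0 < d i ↔ 0 < d i₀) := by
      intro i hi
      have hgi : g i = g i₀ := by rw [(hGR i hi).2, hgi₀]
      rw [hgdef] at hgi
      simp only at hgi
      by_cases h1 : 0 < d i <;> by_cases h2 : 0 < d i₀
      · rw [if_pos h1, if_pos h2] at hgi
        exact ⟨by omega, by tauto⟩
      · rw [if_pos h1, if_neg h2] at hgi
        exact absurd hgi (by omega)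
      · rw [if_neg h1, if_pos h2] at hgi
        exact absurd hgi (by omega)
      · rw [if_neg h1, if_neg h2] at hgi
        exact ⟨by omega, by tauto⟩
    have hGq : ∀ i ∈ G, 0 < q i := fun i hi => (hcomp i (hRmem i (hGR i hi).1).1).1
    have hGp : ∀ i ∈ G, 0 ≤ p i := by
      intro i hi
      have := (hcomp i (hRmem i (hGR i hi).1).1)
      linarith [this.1, this.2.1]
    have hQpos : 0 < ∑ i ∈ G, q i := by
      apply Finset.sum_pos hGq ⟨i₀, hi₀G⟩
    have hPQ1 : (∑ i ∈ G, q i) / 2 ≤ ∑ i ∈ G, p i := by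
      rw [div_le_iff₀ (by norm_num : (0:ℝ) < 2)]
      rw [Finset.sum_mul]
      apply Finset.sum_le_sum
      intro i hi
      have := (hcomp i (hRmem i (hGR i hi).1).1).2.1
      linarith
    have hPQ2 : (∑ i ∈ G, p i) ≤ 2 * ∑ i ∈ G, q i := by
      rw [Finset.mul_sum]
      apply Finset.sum_le_sum
      intro i hi
      exact (hcomp i (hRmem i (hGR i hi).1).1).2.2
    refine ⟨hQpos, hPQ1, hPQ2, ?_⟩
    -- the merge bound
    set n₀ : ℕ := nn i₀ with hn₀def
    have hn₀1 : 1 ≤ n₀ := (hRmem i₀ hi₀R).2.2.1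
    set a : ℝ := (1/2:ℝ)^(n₀+1) with hadef
    have hbnd : ∀ i ∈ G, a * Real.sqrt (q i) < |d i| ∧ |d i| ≤ 2 * a * Real.sqrt (q i) := by
      intro i hi
      obtain ⟨hiR, -⟩ := hGR i hi
      obtain ⟨hiS, hid, -, -⟩ := hRmem i hiR
      obtain ⟨-, hlo, hhi⟩ := hnn_spec i hiS hid
      have hnni : nn i = n₀ := (hsame i hi).1
      have hsq0 : 0 < Real.sqrt (q i) := Real.sqrt_pos.mpr (hGq i hi)
      have hueq : |d i| = u i * Real.sqrt (q i) := by
        rw [hudef]; field_simp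
      constructor
      · rw [hueq, hadef, ← hnni]
        exact (mul_lt_mul_of_pos_right hlo hsq0)
      · rw [hueq]
        have h2a : 2 * a = (1/2:ℝ)^n₀ := by
          rw [hadef, pow_succ]
          ring
        rw [h2a, ← hnni]
        exact mul_le_mul_of_nonneg_right hhi hsq0.le
    have hmerge := bucket_merge G p q a (by positivity)
      (by
        rw [hadef]
        calc (1/2:ℝ)^(n₀+1) ≤ (1/2:ℝ)^2 := by
              apply pow_le_pow_of_le_one (by norm_num) (by norm_num)
              omega
          _ = 1/4 := by norm_num)
      hGq hGp
      (by
        by_cases hsgn : 0 < d i₀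
        · left
          intro i hi
          have hdi : 0 < d i := ((hsame i hi).2).mpr hsgn
          have := hbnd i hi
          rw [abs_of_pos hdi] at this
          exact this
        · right
          intro i hi
          have hdine : d i ≠ 0 := (hRmem i (hGR i hi).1).2.1
          have hdi : d i < 0 := by
            rcases lt_trichotomy (d i) 0 with hc | hc | hc
            · exact hc
            · exact absurd hc hdine
            · exact absurd (((hsame i hi).2).mp hc) hsgn
          have := hbnd i hi
          rw [abs_of_neg hdi] at this
          have hneg : Real.sqrt (q i) - Real.sqrt (p i) = -(d i) := by
            simp only [hddef]; ring
          rw [hneg]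
          exact this)
    rw [hbdef]
    exact hmerge
  have hm0 : (0:ℝ) < m := by linarith
  have hl3 : (3:ℝ) ≤ (ℓ:ℝ) := by exact_mod_cast hl
  -- select at most ℓ-1 buckets carrying enough mass
  obtain ⟨W, hWV, hWcard, hWlow⟩ :
      ∃ W, W ⊆ V ∧ W.card ≤ ℓ - 1 ∧
        (1/200:ℝ) * h * (ℓ:ℝ) / m ≤ (1/4) * ∑ v ∈ W, b v := by
    rcases le_or_gt V.card (ℓ-1) with hsmall | hbig
    · refine ⟨V, subset_rfl, hsmall, ?_⟩
      have h1 : (1/200:ℝ) * h * (ℓ:ℝ) / m ≤ (1/200:ℝ) * h := by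
        rw [div_le_iff₀ hm0]
        nlinarith
      nlinarith [hVsum]
    · obtain ⟨W, hWV, hWcard, hdom⟩ := exists_dominating V b (ℓ-1) hbig.le
      refine ⟨W, hWV, le_of_eq hWcard, ?_⟩
      have havg := dominating_avg V W b hb0 hWV hdom
      have hSw0 : 0 ≤ ∑ w ∈ W, b w := Finset.sum_nonneg (fun w hw => hb0 w (hWV hw))
      have hcastW : (W.card : ℝ) = (ℓ:ℝ) - 1 := by
        rw [hWcard]
        push_cast [Nat.cast_sub (by omega : 1 ≤ ℓ)]
        ring
      rw [hcastW] at havg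
      have hVc4m : (V.card : ℝ) * ∑ w ∈ W, b w ≤ 4 * m * ∑ w ∈ W, b w :=
        mul_le_mul_of_nonneg_right hVcard_m hSw0
      have hchain : ((ℓ:ℝ) - 1) * (3 * h / 8) ≤ 4 * m * ∑ w ∈ W, b w := by
        calc ((ℓ:ℝ) - 1) * (3 * h / 8) ≤ ((ℓ:ℝ) - 1) * ∑ v ∈ V, b v := by
              apply mul_le_mul_of_nonneg_left hVsum (by linarith)
          _ ≤ (V.card : ℝ) * ∑ w ∈ W, b w := havg
          _ ≤ 4 * m * ∑ w ∈ W, b w := hVc4m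
      rw [div_le_iff₀ hm0]
      nlinarith [mul_nonneg hh0.le (by linarith : (0:ℝ) ≤ (ℓ:ℝ) - 3)]
  -- build the channel
  obtain ⟨e, hinj, hne0⟩ := exists_inj_enum W ℓ hl hWcard
  set f : Fin k → Fin ℓ :=
    fun i => if i ∈ R ∧ g i ∈ W then e (g i) else ⟨0, by omega⟩ with hfdef
  refine ⟨detT f, detT_isChannel f, ?_⟩
  have hfiber : ∀ v ∈ W, univ.filter (fun c => f c = e v) = R.filter (fun i => g i = v) := by
    intro v hv
    ext i
    simp only [Finset.mem_filter, Finset.mem_univ, true_and]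
    constructor
    · intro hfi
      rw [hfdef] at hfi
      simp only at hfi
      by_cases hcnd : i ∈ R ∧ g i ∈ W
      · rw [if_pos hcnd] at hfi
        exact ⟨hcnd.1, hinj hcnd.2 hv hfi⟩
      · rw [if_neg hcnd] at hfi
        exfalso
        apply hne0 v hv
        rw [← hfi]
    · intro ⟨hiR, hgiv⟩
      rw [hfdef]
      simp only
      rw [if_pos ⟨hiR, hgiv ▸ hv⟩, hgiv]
  have hmul : ∀ v ∈ W, (detT f).mulVec p (e v) = ∑ i ∈ R.filter (fun i => g i = v), p i ∧
      (detT f).mulVec q (e v) = ∑ i ∈ R.filter (fun i => g i = v), q i := by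
    intro v hv
    rw [detT_mulVec, detT_mulVec, hfiber v hv]
    exact ⟨rfl, rfl⟩
  set O : Finset (Fin ℓ) := W.image e with hOdef
  have hOsub : O ⊆ Finset.univ.filter
      (fun i => 0 < (detT f).mulVec q i ∧
        1 / 2 ≤ (detT f).mulVec p i / (detT f).mulVec q i ∧
        (detT f).mulVec p i / (detT f).mulVec q i ≤ 2) := by
    intro x hx
    rw [hOdef, Finset.mem_image] at hx
    obtain ⟨v, hv, rfl⟩ := hx
    obtain ⟨hQ0, hPQ1, hPQ2, -⟩ := hbucket v (hWV hv)
    obtain ⟨hmp, hmq⟩ := hmul v hv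
    rw [Finset.mem_filter]
    refine ⟨Finset.mem_univ _, ?_, ?_, ?_⟩
    · rw [hmq]; exact hQ0
    · rw [hmp, hmq, le_div_iff₀ hQ0]
      linarith
    · rw [hmp, hmq, div_le_iff₀ hQ0]
      linarith
  have hsumO : ∑ v ∈ W, b v ≤ 4 * ∑ x ∈ O,
      (Real.sqrt ((detT f).mulVec q x) - Real.sqrt ((detT f).mulVec p x))^2 := by
    rw [hOdef, Finset.sum_image (fun x hx y hy hxy => hinj hx hy hxy), Finset.mul_sum]
    apply Finset.sum_le_sum
    intro v hv
    obtain ⟨-, -, -, hb4⟩ := hbucket v (hWV hv)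
    obtain ⟨hmp, hmq⟩ := hmul v hv
    rw [hmp, hmq]
    calc b v ≤ 4 * (Real.sqrt (∑ i ∈ R.filter (fun i => g i = v), p i) -
          Real.sqrt (∑ i ∈ R.filter (fun i => g i = v), q i))^2 := hb4
      _ = 4 * (Real.sqrt (∑ i ∈ R.filter (fun i => g i = v), q i) -
          Real.sqrt (∑ i ∈ R.filter (fun i => g i = v), p i))^2 := by ring
  have hfinal : ∑ x ∈ O, (Real.sqrt ((detT f).mulVec q x) - Real.sqrt ((detT f).mulVec p x))^2 ≤
      ∑ i ∈ Finset.univ.filter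
        (fun i => 0 < (detT f).mulVec q i ∧
          1 / 2 ≤ (detT f).mulVec p i / (detT f).mulVec q i ∧
          (detT f).mulVec p i / (detT f).mulVec q i ≤ 2),
        (Real.sqrt ((detT f).mulVec q i) - Real.sqrt ((detT f).mulVec p i))^2 := by
    apply Finset.sum_le_sum_of_subset_of_nonneg hOsub
    intro i _ _
    positivity
  linarith


lemma binary_case {k : ℕ} (p q : Fin k → ℝ) (hp0 : ∀ i, 0 ≤ p i) (hq0 : ∀ i, 0 ≤ q i)
    (A : Finset (Fin k))
    (hdom : (∀ i ∈ A, 2 * q i ≤ p i) ∨ (∀ i ∈ A, 2 * p i ≤ q i)) :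
    ∃ T : Matrix (Fin 2) (Fin k) ℝ, IsChannel T ∧
      (Real.sqrt 2 - 1)^2 / 2 * ∑ i ∈ A, (Real.sqrt (p i) - Real.sqrt (q i))^2 ≤
        hellingerSq (T.mulVec p) (T.mulVec q) := by
  set f : Fin k → Fin 2 := fun i => if i ∈ A then 0 else 1 with hfdef
  refine ⟨detT f, detT_isChannel f, ?_⟩
  have hfil : univ.filter (fun c => f c = 0) = A := by
    ext i
    simp only [Finset.mem_filter, Finset.mem_univ, true_and, hfdef]
    by_cases hi : i ∈ A
    · simp [hi]
    · simp [hi]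
  have hterm : hellingerSq ((detT f).mulVec p) ((detT f).mulVec q) =
      (Real.sqrt ((detT f).mulVec p 0) - Real.sqrt ((detT f).mulVec q 0))^2 +
      (Real.sqrt ((detT f).mulVec p 1) - Real.sqrt ((detT f).mulVec q 1))^2 := by
    rw [hellingerSq, Fin.sum_univ_two]
  have h0p : (detT f).mulVec p 0 = ∑ i ∈ A, p i := by rw [detT_mulVec, hfil]
  have h0q : (detT f).mulVec q 0 = ∑ i ∈ A, q i := by rw [detT_mulVec, hfil]
  have hnn : 0 ≤ (Real.sqrt ((detT f).mulVec p 1) - Real.sqrt ((detT f).mulVec q 1))^2 := by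
    positivity
  rcases hdom with hd | hd
  · have := merge_incomp A q p hq0 hp0 hd
    rw [hterm, h0p, h0q]
    linarith
  · have := merge_incomp A p q hp0 hq0 hd
    have heq : ∑ i ∈ A, (Real.sqrt (q i) - Real.sqrt (p i))^2
        = ∑ i ∈ A, (Real.sqrt (p i) - Real.sqrt (q i))^2 := by
      apply Finset.sum_congr rfl
      intro i _
      ring
    rw [heq] at this
    rw [hterm, h0p, h0q]
    nlinarith [this]


/-- Reduction to the base case: either a channel to `[ℓ]` retains a large contribution from
comparable elements, or a binary channel preserves the Hellinger divergence. -/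
theorem stmt7 :
    ∃ c : ℝ, 0 < c ∧
      ∀ (k : ℕ) (p q : Fin k → ℝ), IsDist p → IsDist q →
        0 < hellingerSq p q → hellingerSq p q ≤ 1 / Real.exp 1 →
        ∀ ℓ : ℕ, 2 < ℓ →
          (ℓ : ℝ) ≤ min (k : ℝ) (1 + Real.log (1 / hellingerSq p q)) →
          (∃ T : Matrix (Fin ℓ) (Fin k) ℝ, IsChannel T ∧
              c * hellingerSq p q * (ℓ : ℝ) /
                  min (k : ℝ) (1 + Real.log (1 / hellingerSq p q)) ≤
                ∑ i ∈ Finset.univ.filter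
                    (fun i => 0 < T.mulVec q i ∧
                      1 / 2 ≤ T.mulVec p i / T.mulVec q i ∧
                      T.mulVec p i / T.mulVec q i ≤ 2),
                  (Real.sqrt (T.mulVec q i) - Real.sqrt (T.mulVec p i)) ^ 2) ∨
          (∃ T : Matrix (Fin 2) (Fin k) ℝ, IsChannel T ∧
              c * hellingerSq p q ≤ hellingerSq (T.mulVec p) (T.mulVec q)) := by
  refine ⟨1/200, by norm_num, ?_⟩
  intro k p q hp hq hh0 hhe ℓ hl hlm
  set h := hellingerSq p q with hdef
  set t : Fin k → ℝ := fun i => (Real.sqrt (p i) - Real.sqrt (q i))^2 with htdef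
  have ht0 : ∀ i, 0 ≤ t i := fun i => by rw [htdef]; positivity
  set com : Fin k → Prop := fun i => 0 < q i ∧ 1/2 ≤ p i / q i ∧ p i / q i ≤ 2 with hcomdef
  by_cases hScase : h / 2 ≤ ∑ i ∈ univ.filter (fun i => com i), t i
  · left
    exact comparable_case p q hp hq hh0 hhe hl hlm hScase
  · right
    push_neg at hScase
    -- split the complement into small and big parts
    have hsplit1 := Finset.sum_filter_add_sum_filter_not univ com t
    set Sc := univ.filter (fun i => ¬ com i) with hScdef
    have hsplit2 := Finset.sum_filter_add_sum_filter_not Sc (fun i => 2 * p i < q i) t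
    have hSc : h / 2 < ∑ i ∈ Sc, t i := by
      have : ∑ i ∈ univ.filter (fun i => com i), t i + ∑ i ∈ Sc, t i = h := by
        rw [hScdef, hsplit1, hdef, htdef, hellingerSq]
      linarith
    have hsmall_prop : ∀ i ∈ Sc.filter (fun i => 2 * p i < q i), 2 * p i ≤ q i := by
      intro i hi
      rw [Finset.mem_filter] at hi
      linarith [hi.2]
    have hbig_prop : ∀ i ∈ Sc.filter (fun i => ¬ (2 * p i < q i)), 2 * q i ≤ p i := by
      intro i hi
      rw [Finset.mem_filter, hScdef, Finset.mem_filter] at hi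
      obtain ⟨⟨-, hncom⟩, hnlt⟩ := hi
      push_neg at hnlt
      rcases (hq.1 i).lt_or_eq with hq0 | hq0
      · simp only [hcomdef] at hncom
        push_neg at hncom
        rcases lt_or_ge (p i / q i) (1/2) with hr1 | hr1
        · rw [div_lt_iff₀ hq0] at hr1
          linarith
        · have hr2 : 2 < p i / q i := hncom hq0 hr1
          rw [lt_div_iff₀ hq0] at hr2
          linarith
      · rw [← hq0]
        linarith [hp.1 i]
    rcases le_or_gt (h/4) (∑ i ∈ Sc.filter (fun i => 2 * p i < q i), t i) with hsm | hsm
    · -- small part carries h/4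
      obtain ⟨T, hT, hTb⟩ := binary_case p q hp.1 hq.1 _ (Or.inr hsmall_prop)
      refine ⟨T, hT, ?_⟩
      have hTb' : (Real.sqrt 2 - 1)^2 / 2 * ∑ i ∈ Sc.filter (fun i => 2 * p i < q i), t i ≤
          hellingerSq (T.mulVec p) (T.mulVec q) := hTb
      have hs2ge : (1.25:ℝ) ≤ Real.sqrt 2 := by
        rw [show (1.25:ℝ) = Real.sqrt (1.25^2) from (Real.sqrt_sq (by norm_num)).symm]
        exact Real.sqrt_le_sqrt (by norm_num)
      have hC : (0.03125:ℝ) ≤ (Real.sqrt 2 - 1)^2/2 := by nlinarith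
      have hchain : (0.03125:ℝ) * (h/4) ≤ (Real.sqrt 2 - 1)^2/2 *
          ∑ i ∈ Sc.filter (fun i => 2 * p i < q i), t i :=
        mul_le_mul hC hsm (by linarith) (by positivity)
      have hlast : (1/200:ℝ) * h ≤ (0.03125:ℝ) * (h/4) := by linarith
      linarith
    · -- big part carries h/4
      have hbg : h/4 ≤ ∑ i ∈ Sc.filter (fun i => ¬ (2 * p i < q i)), t i := by
        linarith
      obtain ⟨T, hT, hTb⟩ := binary_case p q hp.1 hq.1 _ (Or.inl hbig_prop)
      refine ⟨T, hT, ?_⟩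
      have hTb' : (Real.sqrt 2 - 1)^2 / 2 * ∑ i ∈ Sc.filter (fun i => ¬ (2 * p i < q i)), t i ≤
          hellingerSq (T.mulVec p) (T.mulVec q) := hTb
      have hs2ge : (1.25:ℝ) ≤ Real.sqrt 2 := by
        rw [show (1.25:ℝ) = Real.sqrt (1.25^2) from (Real.sqrt_sq (by norm_num)).symm]
        exact Real.sqrt_le_sqrt (by norm_num)
      have hC : (0.03125:ℝ) ≤ (Real.sqrt 2 - 1)^2/2 := by nlinarith
      have hchain : (0.03125:ℝ) * (h/4) ≤ (Real.sqrt 2 - 1)^2/2 *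
          ∑ i ∈ Sc.filter (fun i => ¬ (2 * p i < q i)), t i :=
        mul_le_mul hC hbg (by linarith) (by positivity)
      have hlast : (1/200:ℝ) * h ≤ (0.03125:ℝ) * (h/4) := by linarith
      linarith
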